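/- Define Ψ_m ∈ NSym (m ≥ 1) by the equation dσ(t)/dt = σ(t)ψ(t), where ψ(t) = ∑_{m≥1} t^{m-1} Ψ_m and σ(t) = ∑_{m≥0} t^m S_m with σ(t)λ(-t) = 1. Then for each m ≥ 1, S_m = ∑_{I ∈ C_m} (1/π_u(I)) Ψ^I, where for I = (i_1,...,i_k), π_u(I) = ∏_{j=1}^k (i_1 + ... + i_j). -/

import Mathlib

noncomputable abbrev NSym : Type := FreeAlgebra ℚ ℕ

noncomputable def Lam : ℕ → NSym := fun m => if m = 0 then 1 else FreeAlgebra.ι ℚ m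

def piu (l : List ℕ) : ℕ :=
  ((List.range l.length).map fun j => (l.take (j + 1)).sum).prod

lemma piu_append (l : List ℕ) (a : ℕ) : piu (l ++ [a]) = piu l * (l.sum + a) := by
  unfold piu
  rw [List.length_append, List.length_singleton, List.range_succ, List.map_append,
    List.prod_append]
  congr 1
  · congr 1
    apply List.map_congr_left
    intro j hj
    rw [List.mem_range] at hj
    rw [List.take_append_of_le_length (by omega)]
  · have h : l.length + 1 = (l ++ [a]).length := by simp
    rw [List.map_singleton, List.prod_singleton, h, List.take_length, List.sum_append,
      List.sum_singleton]

lemma comp_blocks_ne_nil {m : ℕ} (hm : 1 ≤ m) (I : Composition m) : I.blocks ≠ [] := by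
  intro h
  have := I.blocks_sum
  rw [h, List.sum_nil] at this
  omega

lemma sigma_comp_ext {m : ℕ} {f : Fin m → ℕ} {a b : Fin m} {x : Composition (f a)}
    {y : Composition (f b)} (h : a = b) (h2 : x.blocks = y.blocks) :
    (⟨a, x⟩ : Σ j : Fin m, Composition (f j)) = ⟨b, y⟩ := by
  subst h
  exact congrArg _ (Composition.ext h2)

/-- Split off the last block of a composition. -/
def splitLast (m : ℕ) (hm : 1 ≤ m) :
    (Σ j : Fin m, Composition (m - ((j : ℕ) + 1))) ≃ Composition m where
  toFun p := ⟨p.2.blocks ++ [(p.1 : ℕ) + 1], by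
      intro i hi
      rcases List.mem_append.1 hi with h | h
      · exact p.2.blocks_pos h
      · simp at h; omega, by
      have h1 := p.2.blocks_sum
      have h2 := p.1.2
      rw [List.sum_append, List.sum_singleton, h1]
      omega⟩
  invFun I :=
    ⟨⟨I.blocks.getLast (comp_blocks_ne_nil hm I) - 1, by
        have h1 := I.blocks_pos (List.getLast_mem (comp_blocks_ne_nil hm I))
        have h2 := List.single_le_sum (l := I.blocks) (fun x _ => Nat.zero_le x) _
          (List.getLast_mem (comp_blocks_ne_nil hm I))
        rw [I.blocks_sum] at h2
        omega⟩,
     ⟨I.blocks.dropLast, by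
        intro i hi
        exact I.blocks_pos ((List.dropLast_sublist I.blocks).mem hi), by
        have h1 := I.blocks_pos (List.getLast_mem (comp_blocks_ne_nil hm I))
        have h3 : I.blocks.dropLast.sum + I.blocks.getLast (comp_blocks_ne_nil hm I) = m := by
          conv_rhs => rw [← I.blocks_sum,
            ← List.dropLast_append_getLast (comp_blocks_ne_nil hm I)]
          rw [List.sum_append, List.sum_singleton]
        show I.blocks.dropLast.sum = m - (I.blocks.getLast (comp_blocks_ne_nil hm I) - 1 + 1)
        omega⟩⟩
  left_inv p := by
    rcases p with ⟨j, c⟩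
    apply sigma_comp_ext (f := fun j : Fin m => m - ((j : ℕ) + 1))
    · ext
      show (c.blocks ++ [(j : ℕ) + 1]).getLast _ - 1 = (j : ℕ)
      rw [List.getLast_concat]
      omega
    · show (c.blocks ++ [(j : ℕ) + 1]).dropLast = c.blocks
      exact List.dropLast_concat
  right_inv I := by
    have h1 := I.blocks_pos (List.getLast_mem (comp_blocks_ne_nil hm I))
    apply Composition.ext
    show I.blocks.dropLast ++ [I.blocks.getLast (comp_blocks_ne_nil hm I) - 1 + 1] = I.blocks
    rw [Nat.sub_add_cancel h1, List.dropLast_append_getLast]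

lemma splitLast_blocks {m : ℕ} (hm : 1 ≤ m) (p : Σ j : Fin m, Composition (m - ((j : ℕ) + 1))) :
    (splitLast m hm p).blocks = p.2.blocks ++ [(p.1 : ℕ) + 1] := rfl

theorem stmt6 (S : ℕ → NSym) (Psi : ℕ → NSym)
    (hS : PowerSeries.mk S * (PowerSeries.mk fun n => (-1 : NSym) ^ n * Lam n) = 1)
    (hPsi : ∀ k : ℕ,
      ((k : ℚ) + 1) • PowerSeries.coeff (R := NSym) (k + 1) (PowerSeries.mk S)
        = PowerSeries.coeff (R := NSym) k
            (PowerSeries.mk S * PowerSeries.mk fun j => Psi (j + 1))) :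
    ∀ m : ℕ, 1 ≤ m →
      S m = ∑ I : Composition m,
        ((piu I.blocks : ℚ)⁻¹) • (I.blocks.map Psi).prod := by
  have hS0 : S 0 = 1 := by
    have h := congrArg (PowerSeries.coeff (R := NSym) 0) hS
    simpa [Lam] using h
  have hrec : ∀ m : ℕ, 1 ≤ m →
      (m : ℚ) • S m = ∑ i ∈ Finset.range m, S i * Psi (m - i) := by
    intro m hm
    obtain ⟨k, rfl⟩ : ∃ k, m = k + 1 := ⟨m - 1, by omega⟩
    have h := hPsi k
    rw [PowerSeries.coeff_mk, PowerSeries.coeff_mul,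
      Finset.Nat.sum_antidiagonal_eq_sum_range_succ_mk] at h
    simp only [PowerSeries.coeff_mk] at h
    push_cast
    rw [h]
    apply Finset.sum_congr rfl
    intro i hi
    rw [Finset.mem_range] at hi
    have : k - i + 1 = k + 1 - i := by omega
    rw [this]
  suffices H : ∀ m : ℕ, S m = ∑ I : Composition m,
      ((piu I.blocks : ℚ)⁻¹) • (I.blocks.map Psi).prod by
    intro m _
    exact H m
  intro m
  induction m using Nat.strong_induction_on with
  | _ m ih =>
  rcases Nat.eq_zero_or_pos m with rfl | hm
  · have hb : ∀ I : Composition 0, I.blocks = [] := by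
      intro I
      cases h : I.blocks with
      | nil => rfl
      | cons a t =>
        exfalso
        have h1 := I.blocks_pos (h ▸ List.mem_cons_self (a := a) (l := t))
        have h2 := I.blocks_sum
        rw [h] at h2
        simp [List.sum_cons] at h2
        omega
    rw [hS0]
    symm
    rw [Finset.sum_congr rfl (fun I _ =>
      show _ = (1 : NSym) from by rw [hb I]; simp [piu])]
    rw [Finset.sum_const, Finset.card_univ, composition_card]
    norm_num
  · -- main case
    rw [← Equiv.sum_comp (splitLast m hm)
      (fun I : Composition m => ((piu I.blocks : ℚ)⁻¹) • (I.blocks.map Psi).prod)]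
    rw [← Finset.univ_sigma_univ, Finset.sum_sigma]
    have hstep : ∀ j : Fin m, ∀ c : Composition (m - ((j : ℕ) + 1)),
        ((piu (splitLast m hm ⟨j, c⟩).blocks : ℚ)⁻¹) •
            ((splitLast m hm ⟨j, c⟩).blocks.map Psi).prod
          = (m : ℚ)⁻¹ • (((piu c.blocks : ℚ)⁻¹ • (c.blocks.map Psi).prod) * Psi ((j : ℕ) + 1)) := by
      intro j c
      rw [splitLast_blocks, piu_append, List.map_append, List.prod_append,
        List.map_singleton, List.prod_singleton]
      have hsum : c.blocks.sum + ((j : ℕ) + 1) = m := by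
        have := c.blocks_sum
        have := j.2
        omega
      rw [hsum]
      push_cast
      rw [mul_inv, mul_comm ((piu c.blocks : ℚ))⁻¹ (m : ℚ)⁻¹, mul_smul, smul_mul_assoc]
    have hm0 : (m : ℚ) ≠ 0 := Nat.cast_ne_zero.mpr (by omega)
    calc S m = (m : ℚ)⁻¹ • ((m : ℚ) • S m) := by
          rw [smul_smul, inv_mul_cancel₀ hm0, one_smul]
      _ = (m : ℚ)⁻¹ • ∑ i ∈ Finset.range m, S i * Psi (m - i) := by rw [hrec m hm]
      _ = (m : ℚ)⁻¹ • ∑ i ∈ Finset.range m, S (m - (i + 1)) * Psi (i + 1) := by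
          congr 1
          rw [← Finset.sum_range_reflect (fun i => S (m - (i + 1)) * Psi (i + 1)) m]
          apply Finset.sum_congr rfl
          intro i hi
          rw [Finset.mem_range] at hi
          have e1 : m - (m - 1 - i + 1) = i := by omega
          have e2 : m - 1 - i + 1 = m - i := by omega
          rw [e1, e2]
      _ = ∑ j : Fin m, ∑ c : Composition (m - ((j : ℕ) + 1)),
            ((piu (splitLast m hm ⟨j, c⟩).blocks : ℚ)⁻¹) •
              ((splitLast m hm ⟨j, c⟩).blocks.map Psi).prod := by
          rw [Finset.smul_sum, ← Fin.sum_univ_eq_sum_range]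
          apply Finset.sum_congr rfl
          intro j _
          rw [Finset.sum_congr rfl (fun c _ => hstep j c), ← Finset.smul_sum,
            ← Finset.sum_mul, ← ih (m - ((j : ℕ) + 1)) (by omega)]
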